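/- Let D₁ and D₂ be probability distributions over X × Y with finite Y, let H be a class of hypotheses X → Y, and let h ∈ H. Define R_D(h) = Pr_{(x,y)~D}[h(x) ≠ y] and the model-dependent hΔH-divergence d_h(D₁, D₂) = sup_{h' ∈ H} |E_{x~(D₁)_X}[1[h(x) ≠ h'(x)]] − E_{x~(D₂)_X}[1[h(x) ≠ h'(x)]]|. Then R_{D₁}(h) ≤ R_{D₂}(h) + d_h(D₁, D₂) + inf_{η ∈ H} (R_{D₁}(η) + R_{D₂}(η)). -/

import Mathlib

open MeasureTheory

/-- Multiclass adaptation bound with the model-dependent `hΔH`-divergence: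
`R_{D₁}(h) ≤ R_{D₂}(h) + d_h(D₁, D₂) + inf_{η∈H}(R_{D₁}(η) + R_{D₂}(η))`,
where `d_h` takes the supremum over `h' ∈ H` with the first hypothesis fixed to `h`. -/
theorem risk_le_risk_add_hdeltaH_div_add_adaptability
    {X Y : Type*} [MeasurableSpace X] [MeasurableSpace Y] [MeasurableSingletonClass Y]
    [Finite Y] (D₁ D₂ : Measure (X × Y))
    [IsProbabilityMeasure D₁] [IsProbabilityMeasure D₂]
    (H : Set (X → Y)) (h : X → Y) (hhH : h ∈ H)
    (hmeas : ∀ η ∈ H, Measurable η) :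
    let R := fun (D : Measure (X × Y)) (f : X → Y) => (D {p | f p.1 ≠ p.2}).toReal
    let E := fun (μ : Measure X) (p q : X → Y) => (μ {x | p x ≠ q x}).toReal
    R D₁ h ≤ R D₂ h +
      sSup {v : ℝ | ∃ h' ∈ H,
        v = |E (D₁.map Prod.fst) h h' - E (D₂.map Prod.fst) h h'|} +
      sInf {v : ℝ | ∃ η ∈ H, v = R D₁ η + R D₂ η} := by
  intro R E
  have hmh := hmeas h hhH
  -- rewrite E in terms of the original measures
  have hEmap : ∀ (D : Measure (X × Y)) [IsProbabilityMeasure D], ∀ η ∈ H,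
      E (D.map Prod.fst) h η = (D {p | h p.1 ≠ η p.1}).toReal := by
    intro D _ η hη
    have hms : MeasurableSet {x | h x ≠ η x} :=
      (measurableSet_eq_fun hmh (hmeas η hη)).compl
    simp only [E, Measure.map_apply measurable_fst hms]
    rfl
  -- basic facts
  have hle1 : ∀ (D : Measure (X × Y)) [IsProbabilityMeasure D] (s : Set (X × Y)),
      (D s).toReal ≤ 1 := by
    intro D _ s
    calc (D s).toReal ≤ (1 : ENNReal).toReal :=
          ENNReal.toReal_mono (by simp) prob_le_one
      _ = 1 := by simp
  have htoRealadd : ∀ (D : Measure (X × Y)) [IsProbabilityMeasure D] (s t u : Set (X × Y)),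
      s ⊆ t ∪ u → (D s).toReal ≤ (D t).toReal + (D u).toReal := by
    intro D _ s t u hsub
    rw [← ENNReal.toReal_add (measure_ne_top D t) (measure_ne_top D u)]
    exact ENNReal.toReal_mono
      (by exact ENNReal.add_ne_top.2 ⟨measure_ne_top D t, measure_ne_top D u⟩)
      ((measure_mono hsub).trans (measure_union_le t u))
  -- the sup set
  set S : Set ℝ := {v : ℝ | ∃ h' ∈ H,
      v = |E (D₁.map Prod.fst) h h' - E (D₂.map Prod.fst) h h'|} with hS
  set T : Set ℝ := {v : ℝ | ∃ η ∈ H, v = R D₁ η + R D₂ η} with hT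
  have hSbdd : BddAbove S := by
    refine ⟨2, fun v hv => ?_⟩
    obtain ⟨h', hh', rfl⟩ := hv
    rw [hEmap D₁ h' hh', hEmap D₂ h' hh']
    have h1 := hle1 D₁ {p | h p.1 ≠ h' p.1}
    have h2 := hle1 D₂ {p | h p.1 ≠ h' p.1}
    have h3 : (0:ℝ) ≤ (D₁ {p | h p.1 ≠ h' p.1}).toReal := ENNReal.toReal_nonneg
    have h4 : (0:ℝ) ≤ (D₂ {p | h p.1 ≠ h' p.1}).toReal := ENNReal.toReal_nonneg
    rw [abs_le]; constructor <;> linarith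
  have hTne : T.Nonempty := ⟨R D₁ h + R D₂ h, h, hhH, rfl⟩
  -- main bound for each η
  have hmain : R D₁ h - R D₂ h - sSup S ≤ sInf T := by
    apply le_csInf hTne
    intro v hv
    obtain ⟨η, hη, rfl⟩ := hv
    have key1 : R D₁ h ≤ R D₁ η + (D₁ {p | h p.1 ≠ η p.1}).toReal := by
      apply htoRealadd
      intro p hp
      by_cases hc : η p.1 = p.2
      · exact Or.inr (fun he => hp (he.trans hc))
      · exact Or.inl hc
    have key2 : (D₂ {p | h p.1 ≠ η p.1}).toReal ≤ R D₂ h + R D₂ η := by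
      apply htoRealadd
      intro p hp
      by_cases hc : h p.1 = p.2
      · exact Or.inr (fun he => hp (hc.trans he.symm))
      · exact Or.inl hc
    have key3 : (D₁ {p | h p.1 ≠ η p.1}).toReal - (D₂ {p | h p.1 ≠ η p.1}).toReal
        ≤ sSup S := by
      refine le_trans (le_abs_self _) (le_csSup hSbdd ?_)
      exact ⟨η, hη, by rw [hEmap D₁ η hη, hEmap D₂ η hη]⟩
    linarith
  linarith
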